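/- Let S1, S2 ∈ Σ^n with Ham(S1,S2) ≤ k, and let S' be the string of length n over the extended alphabet Σ ⊔ {$_1,…,$_n} (where $_1,…,$_n are pairwise distinct symbols not in Σ) defined by S'[i] = S1[i] if S1[i] = S2[i] and S'[i] = $_i otherwise. If |P(S1)| ≥ n/2, then |P(S')| ≥ ((γ−2)/(2γ))·n, where P(S') is the set of cubic positions of S' over the extended alphabet. -/

import Mathlib

open Finset
open scoped Classical

noncomputable section

variable {α : Type*}

/-- `i ↻ n`: 1-indexed wrap-around of an (integer) position. -/
def zwrap (n : ℕ) (i : ℤ) : ℕ := ((i - 1) % (n : ℤ)).toNat + 1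

/-- `S*[i]`: the infinite cyclic extension of the length-`n` string `S` (1-indexed). -/
def cext (n : ℕ) (S : ℕ → α) (i : ℕ) : α := S ((i - 1) % n + 1)

/-- The fragment `S*[a..]`, i.e. the string `w` with `w[j] = S*[a+j-1]`. -/
def frag (n : ℕ) (S : ℕ → α) (a : ℕ) : ℕ → α := fun j => cext n S (a + j - 1)

/-- Hamming distance restricted to positions `[a..b]` (1-indexed strings). -/
def hamIcc (a b : ℕ) (S T : ℕ → α) : ℕ := ((Finset.Icc a b).filter fun j => S j ≠ T j).card

/-- Hamming distance between two length-`n` strings. -/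
def ham (n : ℕ) (S T : ℕ → α) : ℕ := hamIcc 1 n S T

/-- `p` is a period of the length-`L` string `w` (1-indexed). -/
def IsPeriod (L : ℕ) (w : ℕ → α) (p : ℕ) : Prop :=
  1 ≤ p ∧ ∀ j, 1 ≤ j → j + p ≤ L → w j = w (j + p)

/-- `per(w)`: the shortest period of the length-`L` string `w`. -/
def per (L : ℕ) (w : ℕ → α) : ℕ := sInf {p | IsPeriod L w p}

/-- `root(S)`: the length of the primitive root of the length-`n` string `S`,
i.e. the least length of a string `Q` with `S = Q^α`. -/
def root (n : ℕ) (S : ℕ → α) : ℕ := sInf {r | r ∣ n ∧ IsPeriod n S r}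

/-- `S` is `(a,b)`-pseudo-periodic: it has an `(a,b)`-base. -/
def PseudoPeriodic (n : ℕ) (a b : ℝ) (S : ℕ → α) : Prop :=
  ∃ S' : ℕ → α, (root n S' : ℝ) ≤ (n : ℝ) / a ∧ (ham n S S' : ℝ) ≤ b

/-- `cyc(S)`: left cyclic rotation, `cyc(S)[i] = S*[i+1]`. -/
def cyc (n : ℕ) (S : ℕ → α) : ℕ → α := fun i => cext n S (i + 1)

/-- `cyc^m(S)` for an integer `m`: `cyc^m(S)[i] = S*[i+m]` (cyclically). -/
def cycZ (n : ℕ) (m : ℤ) (S : ℕ → α) : ℕ → α := fun i => S (zwrap n ((i : ℤ) + m))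

/-- `rot_n(P) = {(i-1) ↻ n : i ∈ P}`. -/
def rotSet (n : ℕ) (P : Finset ℕ) : Finset ℕ := P.image fun i => zwrap n ((i : ℤ) - 1)

/-- `ρ_{S,i} = per(S*[i..i+3ℓ-1])`. -/
def rho (n ℓ : ℕ) (S : ℕ → α) (i : ℕ) : ℕ := per (3 * ℓ) (frag n S i)

/-- `μ_{S,i}*`: the infinite periodic extension of `μ_{S,i} = S*[i..i+ρ_{S,i}-1]` (1-indexed). -/
def muExt (n ℓ : ℕ) (S : ℕ → α) (i : ℕ) : ℕ → α :=
  fun j => cext n S (i + (j - 1) % rho n ℓ S i)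

/-- `P(S)`: the set of cubic positions of `S`. -/
def cubicSet (n ℓ : ℕ) (S : ℕ → α) : Finset ℕ :=
  (Finset.Icc 1 n).filter fun i => rho n ℓ S i ≤ ℓ

/-- The defining set of `τ_{S,i}`:
`{τ ≥ 1 : τ < (n/(γk))·Ham(S*[i..i+τ-1], μ_{S,i}*[1..τ])}`. -/
def tauSet (n ℓ k : ℕ) (γ : ℝ) (S : ℕ → α) (i : ℕ) : Set ℕ :=
  {τ | 1 ≤ τ ∧ (τ : ℝ) < (n : ℝ) / (γ * k) * (hamIcc 1 τ (frag n S i) (muExt n ℓ S i) : ℝ)}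

/-- `τ_{S,i}`. -/
def tau (n ℓ k : ℕ) (γ : ℝ) (S : ℕ → α) (i : ℕ) : ℕ := sInf (tauSet n ℓ k γ S i)

/-- `R_{S,i} = [i..i+τ_{S,i}-1]`. -/
def Rset (n ℓ k : ℕ) (γ : ℝ) (S : ℕ → α) (i : ℕ) : Finset ℕ :=
  Finset.Icc i (i + tau n ℓ k γ S i - 1)

/-- `M_{S,i} = {j ∈ R_{S,i} : S*[j] ≠ μ_{S,i}*[j-i+1]}`. -/
def Mset (n ℓ k : ℕ) (γ : ℝ) (S : ℕ → α) (i : ℕ) : Finset ℕ :=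
  (Rset n ℓ k γ S i).filter fun j => cext n S j ≠ muExt n ℓ S i (j - i + 1)

/-- `A_{S,i} = {j ∈ R_{S,i} : [j..j+2ℓ-1] ⊆ R_{S,i} \ M_{S,i}}`. -/
def Aset (n ℓ k : ℕ) (γ : ℝ) (S : ℕ → α) (i : ℕ) : Finset ℕ :=
  (Rset n ℓ k γ S i).filter fun j =>
    Finset.Icc j (j + 2 * ℓ - 1) ⊆ Rset n ℓ k γ S i \ Mset n ℓ k γ S i

/-- `f_c(S) = ∪_{i ∈ P(S)} {j ↻ n : j ∈ M_{S,i}}`. -/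
def fc (n ℓ k : ℕ) (γ : ℝ) (S : ℕ → α) : Finset ℕ :=
  (cubicSet n ℓ S).biUnion fun i => (Mset n ℓ k γ S i).image fun j => zwrap n (j : ℤ)

lemma per_congr {A B : Type*} (L : ℕ) (w : ℕ → A) (w' : ℕ → B) (f : A → B)
    (hf : Function.Injective f) (h : ∀ m, 1 ≤ m → m ≤ L → w' m = f (w m)) :
    per L w' = per L w := by
  unfold per
  congr 1
  ext p
  simp only [Set.mem_setOf_eq, IsPeriod]
  constructor
  · rintro ⟨hp, hper⟩
    refine ⟨hp, fun j hj hjp => ?_⟩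
    apply hf
    rw [← h j hj (by omega), ← h (j + p) (by omega) (by omega)]
    exact hper j hj hjp
  · rintro ⟨hp, hper⟩
    refine ⟨hp, fun j hj hjp => ?_⟩
    rw [h j hj (by omega), h (j + p) (by omega) (by omega), hper j hj hjp]

lemma zwrap_aux (n t j : ℕ) (hn : 0 < n) (h1 : 1 ≤ j) (h2 : j ≤ n) (h3 : j ≤ t) :
    zwrap n ((((t - 1) % n + 1 : ℕ) : ℤ) - ((t - j + 1 : ℕ) : ℤ) + 1) = j := by
  have ht1 : 1 ≤ t := le_trans h1 h3
  unfold zwrap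
  have key : ((((t - 1) % n + 1 : ℕ) : ℤ) - ((t - j + 1 : ℕ) : ℤ) + 1 - 1) % n
      = (j : ℤ) - 1 := by
    have hc : ((((t - 1) % n + 1 : ℕ) : ℤ) - ((t - j + 1 : ℕ) : ℤ) + 1 - 1)
        = ((j : ℤ) - 1) + (((t : ℤ) - 1) % n - ((t : ℤ) - 1)) := by
      push_cast [Nat.cast_sub ht1, Nat.cast_sub h3]
      ring
    rw [hc]
    have h2' : ((t : ℤ) - 1) % n - ((t : ℤ) - 1) = (n : ℤ) * (-(((t : ℤ) - 1) / n)) := by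
      rw [Int.emod_def]; ring
    rw [h2', Int.add_mul_emod_self_left]
    have hj1 : (0 : ℤ) ≤ (j : ℤ) - 1 := by
      have : (1 : ℤ) ≤ (j : ℤ) := by exact_mod_cast h1
      omega
    have hj2 : (j : ℤ) - 1 < n := by
      have : (j : ℤ) ≤ n := by exact_mod_cast h2
      omega
    exact Int.emod_eq_of_lt hj1 hj2
  rw [key]
  omega

lemma cubic_lower_bound {α β : Type*} (n k ℓ : ℕ) (γ : ℝ)
    (hk1 : 1 ≤ k) (hγ : 14 ≤ γ) (hℓ1 : 1 ≤ ℓ)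
    (hn : (n : ℝ) = 3 * γ * k * ℓ)
    (S1 S2 : ℕ → α) (S' : ℕ → β) (f : α → β) (hf : Function.Injective f)
    (hS' : ∀ i, S1 i = S2 i → S' i = f (S1 i))
    (hham : ham n S1 S2 ≤ k)
    (hP : (n : ℝ) / 2 ≤ ((cubicSet n ℓ S1).card : ℝ)) :
    ((γ - 2) / (2 * γ)) * (n : ℝ) ≤ ((cubicSet n ℓ S').card : ℝ) := by
  classical
  have hγ0 : (0 : ℝ) < γ := by linarith
  have hk' : (1 : ℝ) ≤ (k : ℝ) := by exact_mod_cast hk1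
  have hl' : (1 : ℝ) ≤ (ℓ : ℝ) := by exact_mod_cast hℓ1
  have hnpos : 0 < n := by
    rcases Nat.eq_zero_or_pos n with h | h
    · exfalso
      rw [h] at hn
      simp only [Nat.cast_zero] at hn
      have hpos : (0 : ℝ) < 3 * γ * (k : ℝ) * (ℓ : ℝ) :=
        mul_pos (mul_pos (mul_pos (by norm_num) hγ0) (by linarith)) (by linarith)
      linarith
    · exact h
  set Bad : Finset ℕ := (Finset.Icc 1 n).filter
    (fun j => ∃ t ∈ Finset.Icc j (j + 3 * ℓ - 1),
      S1 ((t - 1) % n + 1) ≠ S2 ((t - 1) % n + 1)) with hBad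
  -- Step A: cubic positions of S1 away from Bad are cubic in S'
  have hsub : (cubicSet n ℓ S1) \ Bad ⊆ cubicSet n ℓ S' := by
    intro j hj
    rw [Finset.mem_sdiff] at hj
    obtain ⟨hj1, hj2⟩ := hj
    rw [cubicSet, Finset.mem_filter] at hj1 ⊢
    refine ⟨hj1.1, ?_⟩
    have hjIcc := Finset.mem_Icc.mp hj1.1
    have hgood : ∀ t ∈ Finset.Icc j (j + 3 * ℓ - 1),
        S1 ((t - 1) % n + 1) = S2 ((t - 1) % n + 1) := by
      intro t ht
      by_contra hne
      exact hj2 (by simp only [hBad, Finset.mem_filter]; exact ⟨hj1.1, ⟨t, ht, hne⟩⟩)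
    have hrho : rho n ℓ S' j = rho n ℓ S1 j := by
      unfold rho
      apply per_congr _ _ _ f hf
      intro m hm hmL
      have hmem : j + m - 1 ∈ Finset.Icc j (j + 3 * ℓ - 1) := by
        rw [Finset.mem_Icc]; omega
      have heq := hgood _ hmem
      simp only [frag, cext]
      exact hS' _ heq
    rw [hrho]
    exact hj1.2
  -- Step B: Bad has at most k * 3ℓ elements
  have hBadcard : Bad.card ≤ k * (3 * ℓ) := by
    set D : Finset ℕ := (Finset.Icc 1 n).filter (fun d => S1 d ≠ S2 d) with hD
    have hcover : Bad ⊆ D.biUnion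
        (fun d => (Finset.Icc 1 (3 * ℓ)).image fun s : ℕ => zwrap n ((d : ℤ) - (s : ℤ) + 1)) := by
      intro j hj
      simp only [hBad, Finset.mem_filter] at hj
      obtain ⟨hj1, t, ht, hne⟩ := hj
      rw [Finset.mem_Icc] at hj1 ht
      rw [Finset.mem_biUnion]
      refine ⟨(t - 1) % n + 1, ?_, ?_⟩
      · rw [hD, Finset.mem_filter, Finset.mem_Icc]
        have hlt := Nat.mod_lt (t - 1) hnpos
        exact ⟨⟨by omega, by omega⟩, hne⟩
      · rw [Finset.mem_image]
        have hmem : t - j + 1 ∈ Finset.Icc 1 (3 * ℓ) :=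
          Finset.mem_Icc.mpr ⟨by omega, by omega⟩
        exact ⟨t - j + 1, hmem, zwrap_aux n t j hnpos hj1.1 hj1.2 ht.1⟩
    have hDcard : D.card ≤ k := hham
    calc Bad.card ≤ _ := Finset.card_le_card hcover
      _ ≤ ∑ d ∈ D, ((Finset.Icc 1 (3 * ℓ)).image fun s : ℕ => zwrap n ((d : ℤ) - (s : ℤ) + 1)).card :=
        Finset.card_biUnion_le
      _ ≤ ∑ _d ∈ D, 3 * ℓ := by
        apply Finset.sum_le_sum
        intro d _
        calc _ ≤ (Finset.Icc 1 (3 * ℓ)).card := Finset.card_image_le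
          _ = 3 * ℓ := by rw [Nat.card_Icc]; omega
      _ = D.card * (3 * ℓ) := by rw [Finset.sum_const, smul_eq_mul]
      _ ≤ k * (3 * ℓ) := Nat.mul_le_mul_right _ hDcard
  -- Step C: combine
  have hcount : (cubicSet n ℓ S1).card ≤ (cubicSet n ℓ S').card + Bad.card := by
    calc (cubicSet n ℓ S1).card ≤ ((cubicSet n ℓ S1) \ Bad).card + Bad.card :=
          Finset.card_le_card_sdiff_add_card
      _ ≤ (cubicSet n ℓ S').card + Bad.card :=
          Nat.add_le_add_right (Finset.card_le_card hsub) _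
  have hb : (Bad.card : ℝ) ≤ (k : ℝ) * (3 * ℓ) := by exact_mod_cast hBadcard
  have hc : ((cubicSet n ℓ S1).card : ℝ) ≤ ((cubicSet n ℓ S').card : ℝ) + (Bad.card : ℝ) := by
    exact_mod_cast hcount
  have hkl : (k : ℝ) * (3 * ℓ) = (n : ℝ) / γ := by
    rw [hn]; field_simp
  have hfinal : ((γ - 2) / (2 * γ)) * (n : ℝ) = (n : ℝ) / 2 - (n : ℝ) / γ := by
    field_simp
  rw [hfinal]
  linarith

/-- Let `S'` (over the extended alphabet `Σ ⊔ {$_1,…,$_n}`) agree with `S1` where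
`S1` and `S2` agree and carry a fresh symbol `$_i` elsewhere. If `Ham(S1,S2) ≤ k`
and `|P(S1)| ≥ n/2`, then `|P(S')| ≥ ((γ-2)/(2γ))·n`. -/
theorem stmt13 {α : Type*} (n k ℓ : ℕ) (γ : ℝ)
    (hk1 : 1 ≤ k) (hkn : k ≤ n) (hγ : 14 ≤ γ) (hℓ1 : 1 ≤ ℓ)
    (hn : (n : ℝ) = 3 * γ * k * ℓ)
    (S1 S2 : ℕ → α) (hham : ham n S1 S2 ≤ k)
    (hP : (n : ℝ) / 2 ≤ ((cubicSet n ℓ S1).card : ℝ)) :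
    ((γ - 2) / (2 * γ)) * (n : ℝ) ≤
      ((cubicSet n ℓ (fun i =>
        if S1 i = S2 i then (Sum.inl (S1 i) : α ⊕ ℕ) else Sum.inr i)).card : ℝ) := by
  exact cubic_lower_bound n k ℓ γ hk1 hγ hℓ1 hn S1 S2 _ Sum.inl Sum.inl_injective
    (fun i h => if_pos h) hham hP
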